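/- In the FVS dictatorship gadget with dictatorship partition as above, for every j ∈ [k], the subgraph induced by the bit-vertices together with the good test-vertices in T_0 ∪ ... ∪ T_{k−1} minus T_j is acyclic (contains no directed cycle). -/

import Mathlib

open Finset

/-- The sub-cube `C_{x,S} = {z : z_a = x_a for all a not appearing in S}`. -/
def Cube (k R m : ℕ) (x : Fin R → Fin k) (S : Fin m → Fin R) : Set (Fin R → Fin k) :=
  {z | ∀ a : Fin R, (∀ i, S i ≠ a) → z a = x a}

/-- `z ⊕ 1`: add `1 (mod k)` to every coordinate. -/
def shiftPt (k R : ℕ) [NeZero k] (z : Fin R → Fin k) : Fin R → Fin k := fun a => z a + 1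

/-- Bit-vertices of the FVS gadget. -/
abbrev BitV (k R : ℕ) := Fin R → Fin k

/-- Test-vertices of the FVS gadget: pairs `(x, S)`. -/
abbrev TestV (k R m : ℕ) := (Fin R → Fin k) × (Fin m → Fin R)

/-- Vertices of the FVS gadget. -/
abbrev GadV (k R m : ℕ) := BitV k R ⊕ TestV k R m

/-- Arcs of the FVS gadget: `(b_z, t_{x,S})` for `z ∈ C_{x,S}` and
`(t_{x,S}, b_z)` for `z ∈ C⊕_{x,S}`. -/
def gadAdj (k R m : ℕ) [NeZero k] : GadV k R m → GadV k R m → Prop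
  | Sum.inl z, Sum.inr t => z ∈ Cube k R m t.1 t.2
  | Sum.inr t, Sum.inl z => z ∈ shiftPt k R '' Cube k R m t.1 t.2
  | _, _ => False

/-- Kept vertices: all bit-vertices, plus good test-vertices (`s ∉ S`) outside `T_j`
(i.e. with `x_s ≠ j`). -/
def gadKeep (k R m : ℕ) (s : Fin R) (j : Fin k) : GadV k R m → Prop
  | Sum.inl _ => True
  | Sum.inr t => (∀ i, t.2 i ≠ s) ∧ t.1 s ≠ j

/-- In the FVS dictatorship gadget, for every `j ∈ [k]`, the subgraph induced by the
bit-vertices together with the good test-vertices `(T_0 ∪ ⋯ ∪ T_{k-1}) \ T_j`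
is acyclic. -/

private lemma fin_step {n : ℕ} (j a : Fin (n + 1)) (h : a ≠ j) :
    ((a + 1) - (j + 1)).val = ((a - (j + 1)).val) + 1 := by
  have hb : a - (j + 1) ≠ Fin.last n := by
    intro hc
    apply h
    have hlast : (Fin.last n : Fin (n + 1)) = -1 :=
      eq_neg_of_add_eq_zero_left (Fin.last_add_one n)
    have : a = Fin.last n + (j + 1) := by
      rw [← hc]; abel
    rw [this, hlast]; abel
  have h1 : a + 1 - (j + 1) = a - (j + 1) + 1 := by abel
  rw [h1]
  exact Fin.val_add_one_of_lt (Fin.lt_last_iff_ne_last.mpr hb)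

theorem stmt4 (k R m : ℕ) [NeZero k] (s : Fin R) (j : Fin k) :
    ∀ v : GadV k R m,
      ¬ Relation.TransGen
          (fun u w => gadAdj k R m u w ∧ gadKeep k R m s j u ∧ gadKeep k R m s j w)
          v v := by

  obtain ⟨n, rfl⟩ : ∃ n, k = n + 1 :=
    ⟨k - 1, (Nat.succ_pred_eq_of_pos (Nat.pos_of_ne_zero (NeZero.ne k))).symm⟩
  set g : GadV (n + 1) R m → ℕ := fun v =>
    match v with
    | Sum.inl z => 2 * (z s - (j + 1)).val
    | Sum.inr t => 2 * (t.1 s - (j + 1)).val + 1 with hg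
  have step : ∀ u w, (gadAdj (n+1) R m u w ∧ gadKeep (n+1) R m s j u ∧
      gadKeep (n+1) R m s j w) → g u < g w := by
    rintro u w ⟨hadj, hu, hw⟩
    match u, w with
    | Sum.inl z, Sum.inr t =>
      have hz : z s = t.1 s := hadj s hw.1
      simp only [hg, hz]
      omega
    | Sum.inr t, Sum.inl z =>
      obtain ⟨w', hw', rfl⟩ := hadj
      have hz : w' s = t.1 s := hw' s hu.1
      have hne : t.1 s ≠ j := hu.2
      have : shiftPt (n+1) R w' s = t.1 s + 1 := by
        simp [shiftPt, hz]
      simp only [hg, this, fin_step j (t.1 s) hne]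
      omega
    | Sum.inl _, Sum.inl _ => exact absurd hadj (by simp [gadAdj])
    | Sum.inr _, Sum.inr _ => exact absurd hadj (by simp [gadAdj])
  intro v hcyc
  have mono : ∀ a b : GadV (n+1) R m, Relation.TransGen
      (fun u w => gadAdj (n+1) R m u w ∧ gadKeep (n+1) R m s j u ∧
        gadKeep (n+1) R m s j w) a b → g a < g b := by
    intro a b h
    induction h with
    | single h => exact step _ _ h
    | tail _ h ih => exact ih.trans (step _ _ h)
  exact absurd (mono v v hcyc) (lt_irrefl _)
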